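/- Let G be a finite group. The enhanced power graph of G is equal to the power graph of G (the two graphs on vertex set G have the same edges) if and only if there do not exist distinct primes p and q such that G contains an element of order pq. -/

import Mathlib

/-- The power graph of a group: distinct elements are adjacent iff one is a power of
the other. -/
def powerGraph (G : Type) [Group G] : SimpleGraph G where
  Adj a b := a ≠ b ∧ (a ∈ Subgroup.zpowers b ∨ b ∈ Subgroup.zpowers a)
  symm := ⟨fun _ _ h => ⟨h.1.symm, h.2.symm⟩⟩
  loopless := ⟨fun _ h => h.1 rfl⟩

/-- The enhanced power graph of a group: distinct elements are adjacent iff together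
they generate a cyclic subgroup. -/
def enhancedPowerGraph (G : Type) [Group G] : SimpleGraph G where
  Adj a b := a ≠ b ∧ IsCyclic (Subgroup.closure {a, b} : Subgroup G)
  symm := by
    constructor
    intro a b h
    refine ⟨h.1.symm, ?_⟩
    rw [Set.pair_comm b a]
    exact h.2
  loopless := ⟨fun _ h => h.1 rfl⟩

lemma isCyclic_zpowers' {G : Type} [Group G] (g : G) : IsCyclic (Subgroup.zpowers g) := by
  refine ⟨⟨g, Subgroup.mem_zpowers g⟩, ?_⟩
  rintro ⟨x, k, rfl⟩
  exact ⟨k, Subtype.ext (by simp)⟩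

lemma isCyclic_closure_pair_of_mem {G : Type} [Group G] {a b : G}
    (h : a ∈ Subgroup.zpowers b) : IsCyclic (Subgroup.closure ({a, b} : Set G)) := by
  have he : Subgroup.closure ({a, b} : Set G) = Subgroup.zpowers b := by
    apply le_antisymm
    · rw [Subgroup.closure_le]
      rintro x (rfl | rfl)
      · exact h
      · exact Subgroup.mem_zpowers _
    · rw [Subgroup.zpowers_eq_closure]
      exact Subgroup.closure_mono (by simp)
  rw [he]
  exact isCyclic_zpowers' b

lemma pow_mem_zpowers_pow {G : Type} [Group G] [Fintype G] (c : G) (i j : ℕ)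
    (h : orderOf (c ^ i) ∣ orderOf (c ^ j)) : c ^ i ∈ Subgroup.zpowers (c ^ j) := by
  set n := orderOf c with hn
  have hnpos : 0 < n := orderOf_pos c
  set d := Nat.gcd n i with hd
  set e := Nat.gcd n j with he
  have hdn : d ∣ n := Nat.gcd_dvd_left n i
  have hdi : d ∣ i := Nat.gcd_dvd_right n i
  have hen : e ∣ n := Nat.gcd_dvd_left n j
  have hepos : 0 < e := Nat.gcd_pos_of_pos_left j hnpos
  have hdpos : 0 < d := Nat.gcd_pos_of_pos_left i hnpos
  rw [orderOf_pow c, orderOf_pow c, ← hn, ← hd, ← he] at h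
  have hed : e ∣ d := by
    obtain ⟨t, ht⟩ := h
    have hne : 0 < n / e := Nat.div_pos (Nat.le_of_dvd hnpos hen) hepos
    have h1 : d * (n / e) = (e * t) * (n / e) := by
      calc d * (n / e) = d * ((n / d) * t) := by rw [ht]
        _ = (d * (n / d)) * t := by ring
        _ = n * t := by rw [Nat.mul_div_cancel' hdn]
        _ = (e * (n / e)) * t := by rw [Nat.mul_div_cancel' hen]
        _ = (e * t) * (n / e) := by ring
    exact ⟨t, Nat.eq_of_mul_eq_mul_right hne h1⟩
  have h1 : c ^ e ∈ Subgroup.zpowers (c ^ j) := by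
    refine ⟨Nat.gcdB n j, ?_⟩
    have hb : (e : ℤ) = n * Nat.gcdA n j + j * Nat.gcdB n j := Nat.gcd_eq_gcd_ab n j
    have hcn : c ^ (n : ℤ) = 1 := by
      rw [zpow_natCast, hn]; exact pow_orderOf_eq_one c
    calc (c ^ j) ^ Nat.gcdB n j = c ^ ((j : ℤ) * Nat.gcdB n j) := by
          rw [← zpow_natCast c j, ← zpow_mul]
      _ = (1 : G) ^ Nat.gcdA n j * c ^ ((j : ℤ) * Nat.gcdB n j) := by
          rw [one_zpow, one_mul]
      _ = (c ^ (n : ℤ)) ^ Nat.gcdA n j * c ^ ((j : ℤ) * Nat.gcdB n j) := by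
          rw [hcn]
      _ = c ^ ((n : ℤ) * Nat.gcdA n j) * c ^ ((j : ℤ) * Nat.gcdB n j) := by
          rw [← zpow_mul]
      _ = c ^ ((n : ℤ) * Nat.gcdA n j + (j : ℤ) * Nat.gcdB n j) := (zpow_add c _ _).symm
      _ = c ^ (e : ℤ) := by rw [← hb]
      _ = c ^ e := zpow_natCast c e
  have h2 : (c ^ e) ^ (d / e * (i / d)) = c ^ i := by
    rw [← pow_mul, ← Nat.mul_assoc, Nat.mul_div_cancel' hed, Nat.mul_div_cancel' hdi]
  exact h2 ▸ Subgroup.pow_mem _ h1 _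

lemma orderOf_isPrimePow' {G : Type} [Group G] [Fintype G]
    (hyp : ¬ ∃ p q : ℕ, p.Prime ∧ q.Prime ∧ p ≠ q ∧ ∃ g : G, orderOf g = p * q)
    (c : G) : ∃ p k : ℕ, p.Prime ∧ orderOf c = p ^ k := by
  set n := orderOf c with hn
  have hnpos : 0 < n := orderOf_pos c
  rcases eq_or_ne n 1 with h1 | h1
  · exact ⟨2, 0, Nat.prime_two, by rw [pow_zero]; exact h1⟩
  set p := n.minFac with hp
  have hpp : p.Prime := Nat.minFac_prime h1
  have huniq : ∀ {q : ℕ}, q.Prime → q ∣ n → q = p := by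
    intro q hq hqn
    by_contra hne
    have hpn : p ∣ n := Nat.minFac_dvd n
    have hcop : Nat.Coprime p q := (Nat.coprime_primes hpp hq).mpr (Ne.symm hne)
    have hpq : p * q ∣ n := hcop.mul_dvd_of_dvd_of_dvd hpn hqn
    set m := n / (p * q) with hm
    have hmn : m ∣ n := Nat.div_dvd_of_dvd hpq
    have horder : orderOf (c ^ m) = p * q := by
      rw [orderOf_pow c, ← hn, Nat.gcd_eq_right hmn, Nat.div_div_self hpq hnpos.ne']
    exact hyp ⟨p, q, hpp, hq, fun hpq => hne hpq.symm, c ^ m, horder⟩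
  exact ⟨p, n.primeFactorsList.length, hpp,
    Nat.eq_prime_pow_of_unique_prime_dvd hnpos.ne' huniq⟩

set_option maxHeartbeats 1000000 in
/-- The enhanced power graph of a finite group `G` equals the power graph of `G` if and
only if the Gruenberg–Kegel graph of `G` has no edges, i.e. `G` has no element whose
order is the product of two distinct primes. -/
theorem enhancedPowerGraph_eq_powerGraph_iff
    (G : Type) [Group G] [Fintype G] :
    enhancedPowerGraph G = powerGraph G ↔
      ¬ ∃ p q : ℕ, p.Prime ∧ q.Prime ∧ p ≠ q ∧ ∃ g : G, orderOf g = p * q := by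
  constructor
  · intro hEq
    rintro ⟨p, q, pp, qq, hpq, g, hg⟩
    have hoa : orderOf (g ^ p) = q := by
      rw [orderOf_pow g, hg, Nat.gcd_eq_right (dvd_mul_right p q),
        Nat.mul_div_cancel_left q pp.pos]
    have hob : orderOf (g ^ q) = p := by
      rw [orderOf_pow g, hg, Nat.gcd_eq_right (dvd_mul_left q p),
        Nat.mul_div_cancel p qq.pos]
    have hab : g ^ p ≠ g ^ q := by
      intro h
      have h2 := congrArg orderOf h
      rw [hoa, hob] at h2
      exact hpq h2.symm
    have hcl : Subgroup.closure ({g ^ p, g ^ q} : Set G) = Subgroup.zpowers g := by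
      apply le_antisymm
      · rw [Subgroup.closure_le]
        rintro x (rfl | rfl)
        · exact ⟨(p : ℤ), by exact zpow_natCast g p⟩
        · exact ⟨(q : ℤ), by exact zpow_natCast g q⟩
      · rw [Subgroup.zpowers_le]
        have hcop : Nat.gcd p q = 1 := (Nat.coprime_primes pp qq).mpr hpq
        have hb : (1 : ℤ) = p * Nat.gcdA p q + q * Nat.gcdB p q := by
          rw [← Int.natCast_one, ← hcop]; exact Nat.gcd_eq_gcd_ab p q
        have hg1 : g = (g ^ p) ^ Nat.gcdA p q * (g ^ q) ^ Nat.gcdB p q := by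
          calc g = g ^ (1 : ℤ) := (zpow_one g).symm
            _ = g ^ ((p : ℤ) * Nat.gcdA p q + (q : ℤ) * Nat.gcdB p q) := by rw [← hb]
            _ = g ^ ((p : ℤ) * Nat.gcdA p q) * g ^ ((q : ℤ) * Nat.gcdB p q) :=
                zpow_add g _ _
            _ = (g ^ p) ^ Nat.gcdA p q * (g ^ q) ^ Nat.gcdB p q := by
                rw [zpow_mul, zpow_mul, zpow_natCast, zpow_natCast]
        have hmem : (g ^ p) ^ Nat.gcdA p q * (g ^ q) ^ Nat.gcdB p q ∈
            Subgroup.closure ({g ^ p, g ^ q} : Set G) := mul_mem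
          (Subgroup.zpow_mem _ (Subgroup.subset_closure (by simp)) _)
          (Subgroup.zpow_mem _
            (Subgroup.subset_closure (by simp)) _)
        rw [← hg1] at hmem
        exact hmem
    have hadj : (enhancedPowerGraph G).Adj (g ^ p) (g ^ q) :=
      ⟨hab, by rw [hcl]; exact isCyclic_zpowers' g⟩
    rw [hEq] at hadj
    rcases hadj.2 with hmem | hmem
    · have := orderOf_dvd_of_mem_zpowers hmem
      rw [hoa, hob] at this
      exact hpq ((Nat.prime_dvd_prime_iff_eq qq pp).mp this).symm
    · have := orderOf_dvd_of_mem_zpowers hmem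
      rw [hoa, hob] at this
      exact hpq ((Nat.prime_dvd_prime_iff_eq pp qq).mp this)
  · intro hyp
    ext a b
    constructor
    · rintro ⟨hab, hcyc⟩
      refine ⟨hab, ?_⟩
      obtain ⟨c', hc'⟩ := hcyc.exists_generator
      have ha : a ∈ Subgroup.closure ({a, b} : Set G) :=
        Subgroup.subset_closure (by simp)
      have hb : b ∈ Subgroup.closure ({a, b} : Set G) :=
        Subgroup.subset_closure (by simp)
      set c : G := (c' : G) with hc
      have hac : a ∈ Subgroup.zpowers c := by
        obtain ⟨k, hk⟩ := hc' ⟨a, ha⟩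
        exact ⟨k, by simpa using congrArg Subtype.val hk⟩
      have hbc : b ∈ Subgroup.zpowers c := by
        obtain ⟨k, hk⟩ := hc' ⟨b, hb⟩
        exact ⟨k, by simpa using congrArg Subtype.val hk⟩
      obtain ⟨i, hi⟩ := (Submonoid.mem_powers_iff _ _).mp
        (mem_powers_iff_mem_zpowers.mpr hac)
      obtain ⟨j, hj⟩ := (Submonoid.mem_powers_iff _ _).mp
        (mem_powers_iff_mem_zpowers.mpr hbc)
      obtain ⟨p, k, hp, hck⟩ := orderOf_isPrimePow' hyp c
      have hda : orderOf a ∣ p ^ k := hck ▸ orderOf_dvd_of_mem_zpowers hac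
      have hdb : orderOf b ∣ p ^ k := hck ▸ orderOf_dvd_of_mem_zpowers hbc
      obtain ⟨s, hs, hsa⟩ := (Nat.dvd_prime_pow hp).mp hda
      obtain ⟨t, ht, htb⟩ := (Nat.dvd_prime_pow hp).mp hdb
      rcases le_total s t with hst | hts
      · left
        rw [← hi, ← hj]
        exact pow_mem_zpowers_pow c i j
          (by rw [hi, hj, hsa, htb]; exact pow_dvd_pow p hst)
      · right
        rw [← hi, ← hj]
        exact pow_mem_zpowers_pow c j i
          (by rw [hi, hj, hsa, htb]; exact pow_dvd_pow p hts)
    · rintro ⟨hab, hmem | hmem⟩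
      · exact ⟨hab, isCyclic_closure_pair_of_mem hmem⟩
      · refine ⟨hab, ?_⟩
        rw [Set.pair_comm]
        exact isCyclic_closure_pair_of_mem hmem
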